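/- Fix an integer k ≥ 1 and define g_k(x) = x·f_{k−1}(x)/f_k(x) for x > 0. Then for every x > 0 one has g_k(x) > k. -/

import Mathlib

/-- `fPo k μ = e^{-μ} ∑_{i ≥ k} μ^i / i!`, the probability that a Poisson random
variable with mean `μ` is at least `k`. -/
noncomputable def fPo (k : ℕ) (μ : ℝ) : ℝ :=
  Real.exp (-μ) * ∑' i : ℕ, μ ^ (k + i) / (Nat.factorial (k + i) : ℝ)

/-- `gPo k x = x * f_{k-1}(x) / f_k(x)`. -/
noncomputable def gPo (k : ℕ) (x : ℝ) : ℝ := x * fPo (k - 1) x / fPo k x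

lemma summable_aux (k : ℕ) (x : ℝ) :
    Summable (fun i : ℕ => x ^ (k + i) / (Nat.factorial (k + i) : ℝ)) := by
  have h := (summable_nat_add_iff (f := fun n : ℕ => x ^ n / (Nat.factorial n : ℝ)) k).2
    (Real.summable_pow_div_factorial x)
  simpa [add_comm] using h

lemma fPo_pos (k : ℕ) {x : ℝ} (hx : 0 < x) : 0 < fPo k x := by
  unfold fPo
  apply mul_pos (Real.exp_pos _)
  refine Summable.tsum_pos (summable_aux k x) (fun i => by positivity) 0 (by positivity)

lemma term_eq (m i : ℕ) (x : ℝ) :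
    x * (x ^ (m + i) / (Nat.factorial (m + i) : ℝ)) =
    ((m + 1 + i : ℕ) : ℝ) * (x ^ (m + 1 + i) / (Nat.factorial (m + 1 + i) : ℝ)) := by
  have h1 : m + 1 + i = (m + i) + 1 := by omega
  rw [h1, Nat.factorial_succ, pow_succ]
  have hf : (Nat.factorial (m + i) : ℝ) ≠ 0 := Nat.cast_ne_zero.2 (Nat.factorial_ne_zero _)
  have hs : ((m + i : ℕ) : ℝ) + 1 ≠ 0 := by positivity
  push_cast
  field_simp

theorem stmt2 (k : ℕ) (hk : 1 ≤ k) :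
    ∀ x : ℝ, 0 < x → (k : ℝ) < gPo k x := by
  obtain ⟨m, rfl⟩ : ∃ m, k = m + 1 := ⟨k - 1, by omega⟩
  intro x hx
  have hpos := fPo_pos (m + 1) hx
  rw [gPo, lt_div_iff₀ hpos]
  show ((m + 1 : ℕ) : ℝ) * fPo (m + 1) x < x * fPo (m + 1 - 1) x
  simp only [Nat.add_sub_cancel]
  unfold fPo
  have key : ∑' i : ℕ, ((m + 1 : ℕ) : ℝ) * (x ^ (m + 1 + i) / (Nat.factorial (m + 1 + i) : ℝ))
      < ∑' i : ℕ, x * (x ^ (m + i) / (Nat.factorial (m + i) : ℝ)) := by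
    have hg : Summable (fun i : ℕ => x * (x ^ (m + i) / (Nat.factorial (m + i) : ℝ))) :=
      (summable_aux m x).mul_left x
    have hf : Summable (fun i : ℕ =>
        ((m + 1 : ℕ) : ℝ) * (x ^ (m + 1 + i) / (Nat.factorial (m + 1 + i) : ℝ))) :=
      (summable_aux (m + 1) x).mul_left _
    refine Summable.tsum_lt_tsum (i := 1) (fun i => ?_) ?_ hf hg
    · rw [term_eq]
      apply mul_le_mul_of_nonneg_right
      · exact Nat.cast_le.mpr (Nat.le_add_right (m + 1) i)
      · positivity
    · rw [term_eq]
      apply mul_lt_mul_of_pos_right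
      · exact_mod_cast Nat.lt_add_of_pos_right (by norm_num : 0 < 1)
      · positivity
  calc ((m + 1 : ℕ) : ℝ) * (Real.exp (-x) * ∑' i : ℕ, x ^ (m + 1 + i) / (Nat.factorial (m + 1 + i) : ℝ))
      = Real.exp (-x) * ∑' i : ℕ, ((m + 1 : ℕ) : ℝ) * (x ^ (m + 1 + i) / (Nat.factorial (m + 1 + i) : ℝ)) := by
        rw [tsum_mul_left]; ring
    _ < Real.exp (-x) * ∑' i : ℕ, x * (x ^ (m + i) / (Nat.factorial (m + i) : ℝ)) := by
        exact mul_lt_mul_of_pos_left key (Real.exp_pos _)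
    _ = x * (Real.exp (-x) * ∑' i : ℕ, x ^ (m + i) / (Nat.factorial (m + i) : ℝ)) := by
        rw [tsum_mul_left]; ring
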